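/- Fix k ≥ 1 and R > 0. For n ≥ k let D = k(2n−k), vol V_{k,n} = ∏_{i=n−k+1}^{n} 2π^i/(i−1)!, |B^D| = π^{D/2}/Γ(D/2+1), and define the Gilbert–Varshamov radius r̲₀(n) = (2^{−nR} · vol V_{k,n}/|B^D|)^{1/D}. Then (i) r̲₀(n) ≥ (1/2)^{nR/D} for every n ≥ k, with this lower bound monotonically increasing in n, and (ii) lim_{n→∞} r̲₀(n) = √(k · 2^{−R/k}) = √(k/2^{R/k}). -/

import Mathlib

open Real Finset Filter Topology

/-- Total volume of the complex Stiefel manifold `V_{k,n}`. -/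
noncomputable def stiefelVol (k n : ℕ) : ℝ :=
  ∏ i ∈ Finset.Icc (n - k + 1) n, 2 * π ^ (i : ℕ) / (Nat.factorial (i - 1) : ℝ)

/-- Volume of the unit ball in `ℝ^m`. -/
noncomputable def unitBallVol (m : ℕ) : ℝ :=
  π ^ ((m : ℝ) / 2) / Real.Gamma ((m : ℝ) / 2 + 1)

/-- The Gilbert–Varshamov radius for packings of cardinality `2^{nR}` in `V_{k,n}`,
obtained from the flat comparison volume `|B^D| r^D = vol V_{k,n} / 2^{nR}`,
`D = k(2n−k)`. -/
noncomputable def gvRadiusStiefel (k : ℕ) (R : ℝ) (n : ℕ) : ℝ :=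
  ((2 : ℝ) ^ (-(n : ℝ) * R) * stiefelVol k n / unitBallVol (k * (2 * n - k))) ^
    (1 / ((k * (2 * n - k) : ℕ) : ℝ))

/-- **Gilbert–Varshamov lower bound for the Stiefel manifold.** For fixed `k ≥ 1` and rate
`R > 0`: (i) `r̲₀(n) ≥ (1/2)^{nR/D}` for all `n ≥ k`, the latter bound being monotone
increasing in `n`; (ii) `r̲₀(n) → √(k·2^{−R/k})` as `n → ∞`. -/
lemma gamma_half_lb (m : ℕ) : Real.sqrt π / 2 * m.factorial ≤ Real.Gamma ((m : ℝ) + 3/2) := by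
  induction m with
  | zero =>
    have : ((0:ℕ) : ℝ) + 3/2 = 1/2 + 1 := by norm_num
    rw [this, Real.Gamma_add_one (by norm_num), Real.Gamma_one_half_eq]
    simp; ring_nf; rfl
  | succ m ih =>
    have h : ((m+1 : ℕ) : ℝ) + 3/2 = ((m:ℝ) + 3/2) + 1 := by push_cast; ring
    rw [h, Real.Gamma_add_one (by positivity)]
    calc Real.sqrt π / 2 * (m+1).factorial
        = ((m:ℝ)+1) * (Real.sqrt π / 2 * m.factorial) := by
          rw [Nat.factorial_succ]; push_cast; ring
      _ ≤ ((m:ℝ) + 3/2) * Real.Gamma ((m:ℝ) + 3/2) := by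
          apply mul_le_mul (by linarith) ih (by positivity) (by positivity)

lemma gamma_half_ub (m : ℕ) : Real.Gamma ((m : ℝ) + 3/2) ≤ Real.sqrt π * (m+1).factorial := by
  induction m with
  | zero =>
    have : ((0:ℕ) : ℝ) + 3/2 = 1/2 + 1 := by norm_num
    rw [this, Real.Gamma_add_one (by norm_num), Real.Gamma_one_half_eq]
    simp
    nlinarith [Real.sqrt_nonneg π]
  | succ m ih =>
    have h : ((m+1 : ℕ) : ℝ) + 3/2 = ((m:ℝ) + 3/2) + 1 := by push_cast; ring
    rw [h, Real.Gamma_add_one (by positivity)]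
    calc ((m:ℝ) + 3/2) * Real.Gamma ((m:ℝ) + 3/2)
        ≤ ((m:ℝ) + 2) * (Real.sqrt π * (m+1).factorial) := by
          apply mul_le_mul (by linarith) ih (le_of_lt (Real.Gamma_pos_of_pos (by positivity))) (by positivity)
      _ = Real.sqrt π * (m+2).factorial := by
          rw [show m+2 = (m+1)+1 from rfl, Nat.factorial_succ (m+1)]; push_cast; ring

lemma gamma_div_two_lb (d : ℕ) : (1/2 : ℝ) * (d/2).factorial ≤ Real.Gamma ((d:ℝ)/2 + 1) := by
  rcases Nat.even_or_odd d with ⟨m, hm⟩ | ⟨m, hm⟩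
  · subst hm
    have h1 : (m + m) / 2 = m := by omega
    have h2 : ((m+m : ℕ):ℝ)/2 + 1 = (m:ℝ) + 1 := by push_cast; ring
    rw [h1, h2, Real.Gamma_nat_eq_factorial]
    nlinarith [(Nat.cast_pos (α := ℝ)).mpr (Nat.factorial_pos m)]
  · subst hm
    have h1 : (2*m + 1) / 2 = m := by omega
    have h2 : ((2*m+1 : ℕ):ℝ)/2 + 1 = (m:ℝ) + 3/2 := by push_cast; ring
    rw [h1, h2]
    refine le_trans ?_ (gamma_half_lb m)
    have : (1:ℝ) ≤ Real.sqrt π := by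
      rw [show (1:ℝ) = Real.sqrt 1 by simp]
      exact Real.sqrt_le_sqrt (by nlinarith [Real.pi_gt_three])
    nlinarith [(Nat.cast_pos (α := ℝ)).mpr (Nat.factorial_pos m)]

lemma gamma_div_two_ub (d : ℕ) : Real.Gamma ((d:ℝ)/2 + 1) ≤ Real.sqrt π * (d/2 + 1).factorial := by
  rcases Nat.even_or_odd d with ⟨m, hm⟩ | ⟨m, hm⟩
  · subst hm
    have h1 : (m + m) / 2 = m := by omega
    have h2 : ((m+m : ℕ):ℝ)/2 + 1 = (m:ℝ) + 1 := by push_cast; ring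
    rw [h1, h2, Real.Gamma_nat_eq_factorial]
    have : (1:ℝ) ≤ Real.sqrt π := by
      rw [show (1:ℝ) = Real.sqrt 1 by simp]
      exact Real.sqrt_le_sqrt (by nlinarith [Real.pi_gt_three])
    have h3 : (m.factorial : ℝ) ≤ ((m+1).factorial : ℝ) := by
      exact_mod_cast Nat.factorial_le (by omega)
    nlinarith [(Nat.cast_pos (α := ℝ)).mpr (Nat.factorial_pos m)]
  · subst hm
    have h1 : (2*m + 1) / 2 = m := by omega
    have h2 : ((2*m+1 : ℕ):ℝ)/2 + 1 = (m:ℝ) + 3/2 := by push_cast; ring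
    rw [h1, h2]
    exact gamma_half_ub m

lemma stiefelVol_eq (k n : ℕ) (hkn : k ≤ n) :
    stiefelVol k n = 2^k * π ^ (∑ t ∈ Finset.range k, (n - k + 1 + t)) /
      ∏ t ∈ Finset.range k, ((n - k + t).factorial : ℝ) := by
  rw [stiefelVol, ← Finset.Ico_add_one_right_eq_Icc, Finset.prod_Ico_eq_prod_range]
  have hc : n + 1 - (n - k + 1) = k := by omega
  rw [hc]
  have : ∀ t ∈ Finset.range k, 2 * π ^ (n - k + 1 + t) / ((n - k + 1 + t - 1).factorial : ℝ)
      = 2 * π ^ (n - k + 1 + t) / ((n - k + t).factorial : ℝ) := by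
    intro t _
    congr 3
    omega
  rw [Finset.prod_congr rfl this, Finset.prod_div_distrib, Finset.prod_mul_distrib,
    Finset.prod_const, Finset.prod_pow_eq_pow_sum, Finset.card_range]

lemma sum_exponent (k n : ℕ) (hk : 1 ≤ k) (hkn : k ≤ n) :
    2 * (∑ t ∈ Finset.range k, (n - k + 1 + t)) = k * (2 * n - k) + k := by
  have h : (∑ t ∈ Finset.range k, (n - k + 1 + t)) = k * (n-k+1) + (∑ t ∈ Finset.range k, t) := by
    rw [Finset.sum_add_distrib, Finset.sum_const, smul_eq_mul, Finset.card_range]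
  have h2 := Finset.sum_range_id_mul_two k
  rw [h]
  zify [hkn, hk, show k ≤ 2*n by omega]
  zify [hk] at h2
  linear_combination h2

lemma ratio_eq (k n : ℕ) (hk : 1 ≤ k) (hkn : k ≤ n) :
    stiefelVol k n / unitBallVol (k * (2 * n - k)) =
      2^k * π ^ ((k:ℝ)/2) * Real.Gamma (((k * (2 * n - k) : ℕ) : ℝ)/2 + 1) /
        ∏ t ∈ Finset.range k, ((n - k + t).factorial : ℝ) := by
  set D : ℕ := k * (2 * n - k) with hD
  have hS := sum_exponent k n hk hkn
  set S : ℕ := ∑ t ∈ Finset.range k, (n - k + 1 + t) with hSdef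
  have hSr : (S : ℝ) = (D : ℝ)/2 + (k : ℝ)/2 := by
    have : ((2 * S : ℕ) : ℝ) = ((D + k : ℕ) : ℝ) := by rw [hS]
    push_cast at this
    linarith
  have hπ : (0:ℝ) < π := Real.pi_pos
  have hpow : (π : ℝ) ^ S = π ^ ((D : ℝ)/2) * π ^ ((k : ℝ)/2) := by
    rw [← Real.rpow_natCast π S, hSr, Real.rpow_add hπ]
  have hΓ : 0 < Real.Gamma ((D : ℝ)/2 + 1) := Real.Gamma_pos_of_pos (by positivity)
  have hP : 0 < ∏ t ∈ Finset.range k, ((n - k + t).factorial : ℝ) := by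
    apply Finset.prod_pos
    intro t _
    exact_mod_cast Nat.factorial_pos _
  rw [stiefelVol_eq k n hkn, unitBallVol, ← hSdef, hpow]
  have hπD : (0:ℝ) < π ^ ((D : ℝ)/2) := Real.rpow_pos_of_pos hπ _
  field_simp

lemma sum_base (k n : ℕ) (hk : 1 ≤ k) (hkn : k ≤ n) :
    2 * (∑ t ∈ Finset.range k, (n - k + t)) + k = k * (2 * n - k) := by
  have h : (∑ t ∈ Finset.range k, (n - k + t)) = k * (n-k) + (∑ t ∈ Finset.range k, t) := by
    rw [Finset.sum_add_distrib, Finset.sum_const, smul_eq_mul, Finset.card_range]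
  have h2 := Finset.sum_range_id_mul_two k
  rw [h]
  zify [hkn, hk, show k ≤ 2*n by omega]
  zify [hk] at h2
  linear_combination h2

lemma prod_fac_le (k n : ℕ) (hk : 1 ≤ k) (hkn : k ≤ n) :
    (∏ t ∈ Finset.range k, (n - k + t).factorial) ≤ (k * (2 * n - k) / 2).factorial := by
  have h1 : (∏ t ∈ Finset.range k, (n - k + t).factorial) ≤
      (∑ t ∈ Finset.range k, (n - k + t)).factorial :=
    Nat.le_of_dvd (Nat.factorial_pos _)
      (Nat.prod_factorial_dvd_factorial_sum _ _)
  refine h1.trans (Nat.factorial_le ?_)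
  have h2 := sum_base k n hk hkn
  omega

lemma one_le_ratio (k n : ℕ) (hk : 1 ≤ k) (hkn : k ≤ n) :
    1 ≤ stiefelVol k n / unitBallVol (k * (2 * n - k)) := by
  rw [ratio_eq k n hk hkn]
  set D : ℕ := k * (2 * n - k) with hD
  have hP : (0:ℝ) < ∏ t ∈ Finset.range k, ((n - k + t).factorial : ℝ) :=
    Finset.prod_pos fun t _ => by exact_mod_cast Nat.factorial_pos _
  rw [le_div_iff₀ hP]
  have h1 : (∏ t ∈ Finset.range k, ((n - k + t).factorial : ℝ)) ≤ ((D/2).factorial : ℝ) := by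
    rw [← Nat.cast_prod]
    exact_mod_cast prod_fac_le k n hk hkn
  have h2 := gamma_div_two_lb D
  have h3 : (1:ℝ) ≤ π ^ ((k:ℝ)/2) :=
    Real.one_le_rpow (by nlinarith [Real.pi_gt_three]) (by positivity)
  have h4 : (2:ℝ) ≤ 2^k := by
    calc (2:ℝ) = 2^1 := (pow_one 2).symm
    _ ≤ 2^k := pow_le_pow_right₀ one_le_two hk
  have hΓ : 0 < Real.Gamma ((D : ℝ)/2 + 1) := Real.Gamma_pos_of_pos (by positivity)
  nlinarith [mul_le_mul_of_nonneg_left h3 (le_of_lt hΓ)]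

lemma D_pos (k n : ℕ) (hk : 1 ≤ k) (hkn : k ≤ n) : 0 < k * (2 * n - k) := by
  have : 1 ≤ 2 * n - k := by omega
  positivity

lemma part_i (k : ℕ) (hk : 1 ≤ k) (R : ℝ) (hR : 0 < R) (n : ℕ) (hkn : k ≤ n) :
    ((1 : ℝ) / 2) ^ ((n : ℝ) * R / ((k * (2 * n - k) : ℕ) : ℝ)) ≤ gvRadiusStiefel k R n := by
  set D : ℕ := k * (2 * n - k) with hD
  have hDpos : (0:ℝ) < (D:ℝ) := by exact_mod_cast D_pos k n hk hkn
  have hL : ((1 : ℝ) / 2) ^ ((n : ℝ) * R / (D : ℝ)) =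
      ((2:ℝ) ^ (-(n : ℝ) * R)) ^ (1 / (D:ℝ)) := by
    have h12 : ((1:ℝ)/2) = (2:ℝ) ^ (-1 : ℝ) := by
      rw [Real.rpow_neg_one]; norm_num
    rw [h12, ← Real.rpow_mul (by norm_num : (0:ℝ) ≤ 2),
      ← Real.rpow_mul (by norm_num : (0:ℝ) ≤ 2)]
    congr 1
    ring
  rw [hL, gvRadiusStiefel, ← hD]
  apply Real.rpow_le_rpow (by positivity) ?_ (by positivity)
  rw [mul_div_assoc]
  nth_rewrite 1 [← mul_one ((2:ℝ) ^ (-(n : ℝ) * R))]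
  exact mul_le_mul_of_nonneg_left (one_le_ratio k n hk hkn) (by positivity)

lemma part_ii (k : ℕ) (hk : 1 ≤ k) (R : ℝ) (hR : 0 < R) (m n : ℕ) (hkm : k ≤ m) (hmn : m ≤ n) :
    ((1 : ℝ) / 2) ^ ((m : ℝ) * R / ((k * (2 * m - k) : ℕ) : ℝ)) ≤
      ((1 : ℝ) / 2) ^ ((n : ℝ) * R / ((k * (2 * n - k) : ℕ) : ℝ)) := by
  have hDm : (0:ℝ) < ((k * (2 * m - k) : ℕ) : ℝ) := by exact_mod_cast D_pos k m hk hkm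
  have hDn : (0:ℝ) < ((k * (2 * n - k) : ℕ) : ℝ) := by exact_mod_cast D_pos k n hk (hkm.trans hmn)
  apply Real.rpow_le_rpow_of_exponent_ge (by norm_num) (by norm_num)
  rw [div_le_div_iff₀ hDn hDm]
  have key : (n * (k * (2 * m - k)) : ℕ) ≤ (m * (k * (2 * n - k)) : ℕ) := by
    zify [show k ≤ 2*m by omega, show k ≤ 2*n by omega]
    nlinarith [mul_le_mul_of_nonneg_left (show (m:ℤ) ≤ n by exact_mod_cast hmn)
      (mul_self_nonneg (k:ℤ))]
  have keyR : (n : ℝ) * ((k * (2 * m - k) : ℕ) : ℝ) ≤ (m : ℝ) * ((k * (2 * n - k) : ℕ) : ℝ) := by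
    exact_mod_cast key
  nlinarith

def Dn (k p : ℕ) : ℕ := k * (2*p + k + 2)
def mm (k p : ℕ) : ℕ := Dn k p / 2

lemma tendsto_Dn (k : ℕ) (hk : 1 ≤ k) : Tendsto (fun p => ((Dn k p : ℕ) : ℝ)) atTop atTop := by
  apply tendsto_atTop_mono (fun p => ?_) tendsto_natCast_atTop_atTop
  have : p ≤ Dn k p := by unfold Dn; nlinarith
  exact_mod_cast this

lemma tendsto_one_div_Dn (k : ℕ) (hk : 1 ≤ k) :
    Tendsto (fun p => 1 / ((Dn k p : ℕ) : ℝ)) atTop (𝓝 0) := by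
  simpa [one_div, Pi.inv_def] using (tendsto_Dn k hk).inv_tendsto_atTop

lemma tendsto_log_Dn (k : ℕ) (hk : 1 ≤ k) :
    Tendsto (fun p => Real.log (((Dn k p : ℕ) : ℝ) + 1) / ((Dn k p : ℕ) : ℝ)) atTop (𝓝 0) := by
  have hcore : Tendsto (fun x : ℝ => Real.log x / x) atTop (𝓝 0) :=
    Real.isLittleO_log_id_atTop.tendsto_div_nhds_zero
  have h1 : Tendsto (fun p => ((Dn k p : ℕ) : ℝ) + 1) atTop atTop :=
    tendsto_atTop_add_const_right _ 1 (tendsto_Dn k hk)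
  have h2 := hcore.comp h1
  have h3 : Tendsto (fun p => (Real.log (((Dn k p : ℕ) : ℝ) + 1) / (((Dn k p : ℕ) : ℝ) + 1)) *
      (1 + 1 / ((Dn k p : ℕ) : ℝ))) atTop (𝓝 (0 * (1 + 0))) :=
    h2.mul (tendsto_const_nhds.add (tendsto_one_div_Dn k hk))
  rw [show (0:ℝ) * (1 + 0) = 0 by ring] at h3
  apply h3.congr fun p => ?_
  have hD : (0:ℝ) < ((Dn k p : ℕ) : ℝ) := by
    have : 0 < Dn k p := by unfold Dn; positivity
    exact_mod_cast this
  field_simp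

lemma squeeze0 {f g : ℕ → ℝ} (h0 : ∀ᶠ p in atTop, 0 ≤ f p) (hle : ∀ᶠ p in atTop, f p ≤ g p)
    (hg : Tendsto g atTop (𝓝 0)) : Tendsto f atTop (𝓝 0) :=
  tendsto_of_tendsto_of_tendsto_of_le_of_le' tendsto_const_nhds hg h0 hle

lemma logfac (j : ℕ) (hj : 1 ≤ j) :
    Real.log (j.factorial : ℝ) = Real.log (Stirling.stirlingSeq j) +
      Real.log (2*j) / 2 + j * (Real.log j - 1) := by
  have hspos : 0 < Stirling.stirlingSeq j := by
    obtain ⟨i, rfl⟩ : ∃ i, j = i + 1 := ⟨j - 1, by omega⟩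
    exact Stirling.stirlingSeq'_pos i
  have hj0 : (0:ℝ) < j := by exact_mod_cast hj
  have hs : (0:ℝ) < Real.sqrt (2*j) := Real.sqrt_pos.mpr (by positivity)
  have hp : (0:ℝ) < ((j:ℝ) / Real.exp 1) ^ j := by positivity
  have hfac : (j.factorial : ℝ) = Stirling.stirlingSeq j * (Real.sqrt (2*j) * ((j:ℝ)/Real.exp 1)^j) := by
    rw [Stirling.stirlingSeq]
    field_simp
  rw [hfac, Real.log_mul (ne_of_gt hspos) (by positivity),
    Real.log_mul (ne_of_gt hs) (ne_of_gt hp), Real.log_sqrt (by positivity),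
    Real.log_pow, Real.log_div (ne_of_gt hj0) (Real.exp_ne_zero 1), Real.log_exp]
  push_cast
  ring

def sumj (k p : ℕ) : ℕ := ∑ t ∈ Finset.range k, (p+1+t)

noncomputable def Pp (k p : ℕ) : ℝ := ∏ t ∈ Finset.range k, ((p+1+t).factorial : ℝ)

lemma sumj_eq (k p : ℕ) (hk : 1 ≤ k) : 2 * sumj k p + k = Dn k p := by
  have h : sumj k p = k * (p+1) + (∑ t ∈ Finset.range k, t) := by
    rw [sumj, Finset.sum_add_distrib, Finset.sum_const, smul_eq_mul, Finset.card_range]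
  have h2 := Finset.sum_range_id_mul_two k
  rw [h, Dn]
  zify [hk] at h2 ⊢
  linear_combination h2

lemma Dn_lb (k p : ℕ) (hk : 1 ≤ k) : 2*p + k + 2 ≤ Dn k p := by
  rw [Dn]; nlinarith

lemma mm_facts (k p : ℕ) (hk : 1 ≤ k) :
    sumj k p ≤ mm k p ∧ mm k p ≤ sumj k p + k ∧ 2 * mm k p ≤ Dn k p ∧
      Dn k p ≤ 2 * mm k p + 1 ∧ p + 1 ≤ mm k p ∧ 2 * mm k p ≤ Dn k p := by
  have h1 := sumj_eq k p hk
  have h2 := Dn_lb k p hk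
  unfold mm
  omega

lemma tendsto_mm_atTop (k : ℕ) (hk : 1 ≤ k) : Tendsto (fun p => mm k p) atTop atTop :=
  tendsto_atTop_mono (fun p => by
    simpa using le_trans (Nat.le_succ p) (mm_facts k p hk).2.2.2.2.1) tendsto_id

lemma tendsto_ls_mm (k : ℕ) (hk : 1 ≤ k) :
    Tendsto (fun p => Real.log (Stirling.stirlingSeq (mm k p))) atTop
      (𝓝 (Real.log (Real.sqrt π))) := by
  have h1 : Tendsto (fun p => Stirling.stirlingSeq (mm k p)) atTop (𝓝 (Real.sqrt π)) :=
    Stirling.tendsto_stirlingSeq_sqrt_pi.comp (tendsto_mm_atTop k hk)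
  exact ((Real.continuousAt_log (by positivity)).tendsto.comp h1)

lemma tendsto_ls_shift (t : ℕ) :
    Tendsto (fun p => Real.log (Stirling.stirlingSeq (p+1+t))) atTop
      (𝓝 (Real.log (Real.sqrt π))) := by
  have h0 : Tendsto (fun p : ℕ => p+1+t) atTop atTop :=
    tendsto_atTop_mono (fun p => by simp; omega) tendsto_id
  have h1 : Tendsto (fun p => Stirling.stirlingSeq (p+1+t)) atTop (𝓝 (Real.sqrt π)) :=
    Stirling.tendsto_stirlingSeq_sqrt_pi.comp h0
  exact ((Real.continuousAt_log (by positivity)).tendsto.comp h1)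

lemma tendsto_c_div_shift (c : ℝ) (a : ℕ) :
    Tendsto (fun p : ℕ => c / ((p:ℝ) + a)) atTop (𝓝 0) := by
  have h := (tendsto_add_atTop_iff_nat a).mpr (tendsto_const_div_atTop_nhds_zero_nat c)
  apply h.congr fun p => ?_
  push_cast
  ring

lemma Dn_pos (k p : ℕ) (hk : 1 ≤ k) : (0:ℝ) < ((Dn k p : ℕ) : ℝ) := by
  have : 0 < Dn k p := by rw [Dn]; positivity
  exact_mod_cast this

lemma tendsto_M_div_D (k : ℕ) (hk : 1 ≤ k) :
    Tendsto (fun p => ((mm k p : ℕ) : ℝ) / ((Dn k p : ℕ) : ℝ)) atTop (𝓝 (1/2)) := by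
  have hlow : Tendsto (fun p => 1/2 - (1/2) * (1 / ((Dn k p : ℕ) : ℝ))) atTop (𝓝 (1/2)) := by
    have h1 := (tendsto_one_div_Dn k hk).const_mul (1/2 : ℝ)
    have hc : Tendsto (fun _ : ℕ => (1/2:ℝ)) atTop (𝓝 (1/2:ℝ)) := tendsto_const_nhds
    simpa using hc.sub h1
  apply tendsto_of_tendsto_of_tendsto_of_le_of_le hlow tendsto_const_nhds
    (fun p => ?_) (fun p => ?_)
  · have hD := Dn_pos k p hk
    have key : ((Dn k p : ℕ) : ℝ) ≤ 2 * ((mm k p : ℕ) : ℝ) + 1 := by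
      exact_mod_cast (mm_facts k p hk).2.2.2.1
    have heq : 1/2 - (1/2) * (1 / ((Dn k p : ℕ) : ℝ)) =
        (((Dn k p : ℕ) : ℝ) - 1) / (2 * ((Dn k p : ℕ) : ℝ)) := by
      field_simp
    rw [heq, div_le_div_iff₀ (by positivity) hD]
    nlinarith
  · have hD := Dn_pos k p hk
    have key : 2 * ((mm k p : ℕ) : ℝ) ≤ ((Dn k p : ℕ) : ℝ) := by
      exact_mod_cast (mm_facts k p hk).2.2.1
    rw [div_le_div_iff₀ hD (by norm_num)]
    nlinarith

lemma tendsto_D_div_N (k : ℕ) (hk : 1 ≤ k) :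
    Tendsto (fun p => ((Dn k p : ℕ) : ℝ) / ((p:ℝ) + k + 1)) atTop (𝓝 (2*k)) := by
  have h0 := tendsto_c_div_shift ((k:ℝ)^2) (k+1)
  have hc : Tendsto (fun _ : ℕ => (2*(k:ℝ))) atTop (𝓝 (2*(k:ℝ))) := tendsto_const_nhds
  have h1 := hc.sub h0
  rw [sub_zero] at h1
  apply h1.congr fun p => ?_
  have hN : (0:ℝ) < (p:ℝ) + ((k:ℝ) + 1) := by positivity
  have hcast : ((Dn k p : ℕ):ℝ) = (k:ℝ)*(2*p+k+2) := by rw [Dn]; push_cast; ring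
  rw [hcast]
  push_cast
  field_simp
  ring

lemma tendsto_M_div_N (k : ℕ) (hk : 1 ≤ k) :
    Tendsto (fun p => ((mm k p : ℕ) : ℝ) / ((p:ℝ) + k + 1)) atTop (𝓝 k) := by
  have h := (tendsto_M_div_D k hk).mul (tendsto_D_div_N k hk)
  have heq : (1/2 : ℝ) * (2*(k:ℝ)) = (k:ℝ) := by ring
  rw [heq] at h
  apply h.congr fun p => ?_
  have hD := Dn_pos k p hk
  field_simp

lemma mm_one_le (k p : ℕ) (hk : 1 ≤ k) : (1:ℝ) ≤ ((mm k p : ℕ) : ℝ) := by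
  exact_mod_cast (by have := (mm_facts k p hk).2.2.2.2.1; omega : 1 ≤ mm k p)

lemma MS_facts (k p : ℕ) (hk : 1 ≤ k) :
    0 ≤ ((mm k p : ℕ) : ℝ) - ((sumj k p : ℕ) : ℝ) ∧
      ((mm k p : ℕ) : ℝ) - ((sumj k p : ℕ) : ℝ) ≤ k := by
  have h1 := (mm_facts k p hk).1
  have h2 := (mm_facts k p hk).2.1
  constructor
  · have : ((sumj k p : ℕ) : ℝ) ≤ ((mm k p : ℕ) : ℝ) := by exact_mod_cast h1
    linarith
  · have : ((mm k p : ℕ) : ℝ) ≤ ((sumj k p : ℕ) : ℝ) + k := by exact_mod_cast h2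
    linarith

lemma N_le_D (k p : ℕ) (hk : 1 ≤ k) : ((p:ℝ) + k + 1) ≤ ((Dn k p : ℕ) : ℝ) + 1 := by
  have h : p + k + 1 ≤ Dn k p + 1 := by have := Dn_lb k p hk; omega
  exact_mod_cast h

lemma twoJ_le_D (k p t : ℕ) (hk : 1 ≤ k) (ht : t < k) :
    2*((p:ℝ) + 1 + t) ≤ ((Dn k p : ℕ) : ℝ) + 1 := by
  have h : 2*(p + 1 + t) ≤ Dn k p + 1 := by
    have h2 : 2*p + 2*k ≤ k*(2*p+k+2) := by nlinarith
    have : 2*p + 2*k ≤ Dn k p := by rw [Dn]; exact h2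
    omega
  exact_mod_cast h

lemma sumj_cast (k p : ℕ) :
    ((sumj k p : ℕ) : ℝ) = ∑ t ∈ Finset.range k, ((p:ℝ) + 1 + t) := by
  rw [sumj]
  push_cast
  ring

lemma tendsto_G (k : ℕ) (hk : 1 ≤ k) :
    Tendsto (fun p => (Real.log (((mm k p).factorial : ℕ) : ℝ) - Real.log (Pp k p)) /
      ((Dn k p : ℕ) : ℝ)) atTop (𝓝 (Real.log k / 2)) := by
  have hkR : (0:ℝ) < k := by exact_mod_cast hk
  have hlogD := tendsto_log_Dn k hk
  have hc1 : Tendsto (fun p => Real.log (Stirling.stirlingSeq (mm k p)) * (1/((Dn k p:ℕ):ℝ)))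
      atTop (𝓝 0) := by
    simpa using (tendsto_ls_mm k hk).mul (tendsto_one_div_Dn k hk)
  have hc2 : Tendsto (fun p => (∑ t ∈ Finset.range k,
      Real.log (Stirling.stirlingSeq (p+1+t))) * (1/((Dn k p:ℕ):ℝ))) atTop (𝓝 0) := by
    have hsum := tendsto_finset_sum (Finset.range k) (fun t _ => tendsto_ls_shift t)
    simpa using hsum.mul (tendsto_one_div_Dn k hk)
  have hc3 : Tendsto (fun p => (Real.log (2*((mm k p:ℕ):ℝ))/2) / ((Dn k p:ℕ):ℝ))
      atTop (𝓝 0) := by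
    apply squeeze0 (Eventually.of_forall fun p => ?_) (Eventually.of_forall fun p => ?_) hlogD
    · have hm := mm_one_le k p hk
      have h0 : (0:ℝ) ≤ Real.log (2*((mm k p:ℕ):ℝ)) := Real.log_nonneg (by linarith)
      have hD := Dn_pos k p hk
      positivity
    · have hD := Dn_pos k p hk
      have hm := mm_one_le k p hk
      have h2m : 2*((mm k p:ℕ):ℝ) ≤ ((Dn k p:ℕ):ℝ) + 1 := by
        exact_mod_cast (by have := (mm_facts k p hk).2.2.1; omega : 2*(mm k p) ≤ Dn k p + 1)
      have h0 : (0:ℝ) ≤ Real.log (2*((mm k p:ℕ):ℝ)) := Real.log_nonneg (by linarith)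
      have hnum : Real.log (2*((mm k p:ℕ):ℝ))/2 ≤ Real.log (((Dn k p:ℕ):ℝ) + 1) := by
        have := Real.log_le_log (by linarith : (0:ℝ) < 2*((mm k p:ℕ):ℝ)) h2m
        linarith
      exact (div_le_div_iff_of_pos_right hD).mpr hnum
  have hc4 : Tendsto (fun p : ℕ => (∑ t ∈ Finset.range k,
      Real.log (2*((p:ℝ)+1+t))/2) / ((Dn k p:ℕ):ℝ)) atTop (𝓝 0) := by
    have hg : Tendsto (fun p => (k:ℝ) * (Real.log (((Dn k p:ℕ):ℝ) + 1) / ((Dn k p:ℕ):ℝ)))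
        atTop (𝓝 0) := by simpa using hlogD.const_mul (k:ℝ)
    apply squeeze0 (Eventually.of_forall fun p => ?_) (Eventually.of_forall fun p => ?_) hg
    · have hD := Dn_pos k p hk
      apply div_nonneg ?_ hD.le
      apply Finset.sum_nonneg
      intro t _
      have : (1:ℝ) ≤ 2*((p:ℝ)+1+t) := by
        have : (0:ℝ) ≤ (p:ℝ) := Nat.cast_nonneg p
        have : (0:ℝ) ≤ (t:ℝ) := Nat.cast_nonneg t
        linarith
      have := Real.log_nonneg this
      linarith
    · have hD := Dn_pos k p hk
      have hbound : (∑ t ∈ Finset.range k, Real.log (2*((p:ℝ)+1+t))/2)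
          ≤ (k:ℝ) * Real.log (((Dn k p:ℕ):ℝ) + 1) := by
        have := Finset.sum_le_card_nsmul (Finset.range k)
          (fun t => Real.log (2*((p:ℝ)+1+t))/2) (Real.log (((Dn k p:ℕ):ℝ) + 1)) ?_
        · simpa [Finset.card_range, nsmul_eq_mul] using this
        · intro t ht
          simp only [Finset.mem_range] at ht
          have h2 := twoJ_le_D k p t hk ht
          have hpos : (0:ℝ) < 2*((p:ℝ)+1+t) := by positivity
          have hl := Real.log_le_log hpos h2
          have h0 : (0:ℝ) ≤ Real.log (2*((p:ℝ)+1+t)) := Real.log_nonneg (by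
            have : (0:ℝ) ≤ (p:ℝ) := Nat.cast_nonneg p
            have : (0:ℝ) ≤ (t:ℝ) := Nat.cast_nonneg t
            linarith)
          linarith
      calc (∑ t ∈ Finset.range k, Real.log (2*((p:ℝ)+1+t))/2) / ((Dn k p:ℕ):ℝ)
          ≤ ((k:ℝ) * Real.log (((Dn k p:ℕ):ℝ) + 1)) / ((Dn k p:ℕ):ℝ) :=
            (div_le_div_iff_of_pos_right hD).mpr hbound
        _ = (k:ℝ) * (Real.log (((Dn k p:ℕ):ℝ) + 1) / ((Dn k p:ℕ):ℝ)) := by ring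
  have hea : Tendsto (fun p : ℕ => (((mm k p:ℕ):ℝ)/((Dn k p:ℕ):ℝ)) *
      Real.log (((mm k p:ℕ):ℝ)/((p:ℝ)+k+1))) atTop (𝓝 ((1/2) * Real.log k)) := by
    have hlogMN : Tendsto (fun p : ℕ => Real.log (((mm k p:ℕ):ℝ)/((p:ℝ)+k+1))) atTop
        (𝓝 (Real.log k)) :=
      (Real.continuousAt_log (ne_of_gt hkR)).tendsto.comp (tendsto_M_div_N k hk)
    exact (tendsto_M_div_D k hk).mul hlogMN
  have hkD : Tendsto (fun p : ℕ => (k:ℝ) * (1/((Dn k p:ℕ):ℝ))) atTop (𝓝 0) := by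
    simpa using (tendsto_one_div_Dn k hk).const_mul (k:ℝ)
  have heb : Tendsto (fun p : ℕ => ((((mm k p:ℕ):ℝ) - ((sumj k p:ℕ):ℝ))/((Dn k p:ℕ):ℝ)) *
      Real.log ((p:ℝ)+k+1)) atTop (𝓝 0) := by
    have hg : Tendsto (fun p : ℕ => (k:ℝ) * (Real.log (((Dn k p:ℕ):ℝ) + 1) / ((Dn k p:ℕ):ℝ)))
        atTop (𝓝 0) := by simpa using hlogD.const_mul (k:ℝ)
    apply squeeze0 (Eventually.of_forall fun p => ?_) (Eventually.of_forall fun p => ?_) hg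
    · have hD := Dn_pos k p hk
      have h1 := (MS_facts k p hk).1
      have hN : (1:ℝ) ≤ (p:ℝ)+k+1 := by
        have : (0:ℝ) ≤ (p:ℝ) := Nat.cast_nonneg p
        linarith
      exact mul_nonneg (div_nonneg h1 hD.le) (Real.log_nonneg hN)
    · have hD := Dn_pos k p hk
      have h1 := (MS_facts k p hk).1
      have h2 := (MS_facts k p hk).2
      have hN : (1:ℝ) ≤ (p:ℝ)+k+1 := by
        have : (0:ℝ) ≤ (p:ℝ) := Nat.cast_nonneg p
        linarith
      have hlogN : Real.log ((p:ℝ)+k+1) ≤ Real.log (((Dn k p:ℕ):ℝ) + 1) :=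
        Real.log_le_log (by linarith) (N_le_D k p hk)
      calc ((((mm k p:ℕ):ℝ) - ((sumj k p:ℕ):ℝ))/((Dn k p:ℕ):ℝ)) * Real.log ((p:ℝ)+k+1)
          ≤ ((k:ℝ)/((Dn k p:ℕ):ℝ)) * Real.log (((Dn k p:ℕ):ℝ) + 1) := by
            apply mul_le_mul ((div_le_div_iff_of_pos_right hD).mpr h2) hlogN (Real.log_nonneg hN)
            positivity
        _ = (k:ℝ) * (Real.log (((Dn k p:ℕ):ℝ) + 1) / ((Dn k p:ℕ):ℝ)) := by ring
  have hed : Tendsto (fun p : ℕ => (((mm k p:ℕ):ℝ) - ((sumj k p:ℕ):ℝ))/((Dn k p:ℕ):ℝ))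
      atTop (𝓝 0) := by
    apply squeeze0 (Eventually.of_forall fun p => ?_) (Eventually.of_forall fun p => ?_) hkD
    · exact div_nonneg (MS_facts k p hk).1 (Dn_pos k p hk).le
    · have hD := Dn_pos k p hk
      calc (((mm k p:ℕ):ℝ) - ((sumj k p:ℕ):ℝ))/((Dn k p:ℕ):ℝ)
          ≤ (k:ℝ)/((Dn k p:ℕ):ℝ) := (div_le_div_iff_of_pos_right hD).mpr (MS_facts k p hk).2
        _ = (k:ℝ) * (1/((Dn k p:ℕ):ℝ)) := by ring
  have hecterm : ∀ t, t < k → Tendsto (fun p : ℕ =>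
      ((((p:ℝ)+1+t)/((Dn k p:ℕ):ℝ)) * Real.log (((p:ℝ)+k+1)/((p:ℝ)+1+t)))) atTop (𝓝 0) := by
    intro t ht
    apply squeeze0 (Eventually.of_forall fun p => ?_) (Eventually.of_forall fun p => ?_) hkD
    · have hD := Dn_pos k p hk
      have hJ : (0:ℝ) < (p:ℝ)+1+t := by positivity
      have hJN : (p:ℝ)+1+t ≤ (p:ℝ)+k+1 := by
        have : (t:ℝ) ≤ (k:ℝ) := by exact_mod_cast ht.le
        linarith
      have hlog : (0:ℝ) ≤ Real.log (((p:ℝ)+k+1)/((p:ℝ)+1+t)) :=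
        Real.log_nonneg ((one_le_div hJ).mpr hJN)
      positivity
    · have hD := Dn_pos k p hk
      have hJ : (0:ℝ) < (p:ℝ)+1+t := by positivity
      have hN : (0:ℝ) < (p:ℝ)+k+1 := by positivity
      have hlog : Real.log (((p:ℝ)+k+1)/((p:ℝ)+1+t)) ≤ ((p:ℝ)+k+1)/((p:ℝ)+1+t) - 1 :=
        Real.log_le_sub_one_of_pos (by positivity)
      calc (((p:ℝ)+1+t)/((Dn k p:ℕ):ℝ)) * Real.log (((p:ℝ)+k+1)/((p:ℝ)+1+t))
          ≤ (((p:ℝ)+1+t)/((Dn k p:ℕ):ℝ)) * (((p:ℝ)+k+1)/((p:ℝ)+1+t) - 1) :=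
            mul_le_mul_of_nonneg_left hlog (by positivity)
        _ = (((p:ℝ)+k+1) - ((p:ℝ)+1+t))/((Dn k p:ℕ):ℝ) := by
            field_simp
        _ ≤ (k:ℝ)/((Dn k p:ℕ):ℝ) := by
            apply (div_le_div_iff_of_pos_right hD).mpr
            have : (0:ℝ) ≤ (t:ℝ) := Nat.cast_nonneg t
            linarith
        _ = (k:ℝ) * (1/((Dn k p:ℕ):ℝ)) := by ring
  have hec : Tendsto (fun p : ℕ => ∑ t ∈ Finset.range k,
      ((((p:ℝ)+1+t)/((Dn k p:ℕ):ℝ)) * Real.log (((p:ℝ)+k+1)/((p:ℝ)+1+t)))) atTop (𝓝 0) := by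
    have := tendsto_finset_sum (Finset.range k) (fun t ht =>
      hecterm t (Finset.mem_range.mp ht))
    simpa using this
  have total := ((((hc1.sub hc2).add hc3).sub hc4).add (((hea.add heb).add hec).sub hed))
  rw [show (0:ℝ) - 0 + 0 - 0 + ((1/2 * Real.log (k:ℝ) + 0) + 0 - 0) = Real.log (k:ℝ) / 2
    by ring] at total
  apply total.congr fun p => ?_
  have hD := Dn_pos k p hk
  have hM1 := mm_one_le k p hk
  have hN : (0:ℝ) < (p:ℝ)+k+1 := by positivity
  have hfm := logfac (mm k p) (by have := (mm_facts k p hk).2.2.2.2.1; omega)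
  have hfP : Real.log (Pp k p) = ∑ t ∈ Finset.range k,
      (Real.log (Stirling.stirlingSeq (p+1+t)) + Real.log (2*((p:ℝ)+1+t))/2 +
        ((p:ℝ)+1+t)*(Real.log ((p:ℝ)+1+t) - 1)) := by
    rw [Pp, Real.log_prod (fun t _ => by
      exact_mod_cast (Nat.factorial_pos (p+1+t)).ne')]
    refine Finset.sum_congr rfl fun t _ => ?_
    rw [logfac (p+1+t) (by omega)]
    push_cast
    ring
  have hsplit : (∑ t ∈ Finset.range k,
      ((((p:ℝ)+1+t)/((Dn k p:ℕ):ℝ)) * Real.log (((p:ℝ)+k+1)/((p:ℝ)+1+t)))) =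
      (Real.log ((p:ℝ)+k+1) * ((sumj k p : ℕ):ℝ) -
        ∑ t ∈ Finset.range k, ((p:ℝ)+1+t) * Real.log ((p:ℝ)+1+t)) / ((Dn k p:ℕ):ℝ) := by
    rw [sumj_cast, Finset.mul_sum, ← Finset.sum_sub_distrib, Finset.sum_div]
    refine Finset.sum_congr rfl fun t _ => ?_
    have hJ : (0:ℝ) < (p:ℝ)+1+t := by positivity
    rw [Real.log_div (ne_of_gt hN) (ne_of_gt hJ)]
    ring
  have hfPsplit : Real.log (Pp k p) =
      (∑ t ∈ Finset.range k, Real.log (Stirling.stirlingSeq (p+1+t))) +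
      (∑ t ∈ Finset.range k, Real.log (2*((p:ℝ)+1+t))/2) +
      ((∑ t ∈ Finset.range k, ((p:ℝ)+1+t) * Real.log ((p:ℝ)+1+t)) - ((sumj k p : ℕ):ℝ)) := by
    rw [hfP, sumj_cast, Finset.sum_add_distrib, Finset.sum_add_distrib,
      ← Finset.sum_sub_distrib]
    congr 1
    refine Finset.sum_congr rfl fun t _ => ?_
    ring
  have hlogM : Real.log (((mm k p:ℕ):ℝ)/((p:ℝ)+k+1)) =
      Real.log ((mm k p:ℕ):ℝ) - Real.log ((p:ℝ)+k+1) :=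
    Real.log_div (by linarith) (ne_of_gt hN)
  rw [hsplit, hfPsplit, hlogM, hfm]
  field_simp
  ring


lemma Pp_pos (k p : ℕ) : 0 < Pp k p :=
  Finset.prod_pos fun t _ => by exact_mod_cast Nat.factorial_pos _

lemma tendsto_F3 (k : ℕ) (hk : 1 ≤ k) :
    Tendsto (fun p : ℕ => (Real.log (Real.Gamma (((Dn k p:ℕ):ℝ)/2 + 1)) -
      Real.log (Pp k p)) / ((Dn k p:ℕ):ℝ)) atTop (𝓝 (Real.log k / 2)) := by
  have hG := tendsto_G k hk
  have hlogD := tendsto_log_Dn k hk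
  have hlow : Tendsto (fun p : ℕ => (Real.log (((mm k p).factorial : ℕ) : ℝ) -
      Real.log (Pp k p)) / ((Dn k p:ℕ):ℝ) + Real.log (1/2) * (1/((Dn k p:ℕ):ℝ)))
      atTop (𝓝 (Real.log k / 2)) := by
    have h2 := (tendsto_one_div_Dn k hk).const_mul (Real.log (1/2))
    simpa using hG.add h2
  have hup : Tendsto (fun p : ℕ => (Real.log (((mm k p).factorial : ℕ) : ℝ) -
      Real.log (Pp k p)) / ((Dn k p:ℕ):ℝ) + (Real.log (Real.sqrt π) * (1/((Dn k p:ℕ):ℝ)) +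
        Real.log (((Dn k p:ℕ):ℝ)+1) / ((Dn k p:ℕ):ℝ))) atTop (𝓝 (Real.log k / 2)) := by
    have h2 := ((tendsto_one_div_Dn k hk).const_mul (Real.log (Real.sqrt π))).add hlogD
    simpa using hG.add h2
  apply tendsto_of_tendsto_of_tendsto_of_le_of_le hlow hup (fun p => ?_) (fun p => ?_)
  · have hD := Dn_pos k p hk
    have hfac : (0:ℝ) < ((mm k p).factorial : ℝ) := by exact_mod_cast Nat.factorial_pos _
    have hlb := gamma_div_two_lb (Dn k p)
    have hkey : Real.log (1/2) + Real.log (((mm k p).factorial : ℕ) : ℝ) ≤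
        Real.log (Real.Gamma (((Dn k p:ℕ):ℝ)/2 + 1)) := by
      rw [← Real.log_mul (by norm_num) (ne_of_gt hfac)]
      exact Real.log_le_log (by positivity) (by exact_mod_cast hlb)
    calc (Real.log (((mm k p).factorial : ℕ) : ℝ) - Real.log (Pp k p)) / ((Dn k p:ℕ):ℝ) +
          Real.log (1/2) * (1/((Dn k p:ℕ):ℝ))
        = (Real.log (((mm k p).factorial : ℕ) : ℝ) - Real.log (Pp k p) + Real.log (1/2)) /
            ((Dn k p:ℕ):ℝ) := by ring
      _ ≤ (Real.log (Real.Gamma (((Dn k p:ℕ):ℝ)/2 + 1)) - Real.log (Pp k p)) /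
            ((Dn k p:ℕ):ℝ) := by
          apply (div_le_div_iff_of_pos_right hD).mpr
          linarith
  · have hD := Dn_pos k p hk
    have hΓ : 0 < Real.Gamma (((Dn k p:ℕ):ℝ)/2 + 1) := Real.Gamma_pos_of_pos (by positivity)
    have hub := gamma_div_two_ub (Dn k p)
    have hmmd : Dn k p / 2 = mm k p := rfl
    rw [hmmd] at hub
    have hfacsucc : (((mm k p + 1).factorial : ℕ) : ℝ) =
        (((mm k p):ℕ):ℝ) * ((mm k p).factorial : ℝ) + ((mm k p).factorial : ℝ) := by
      rw [Nat.factorial_succ]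
      push_cast
      ring
    have hfac : (0:ℝ) < ((mm k p).factorial : ℝ) := by exact_mod_cast Nat.factorial_pos _
    have hM1 := mm_one_le k p hk
    have hkey : Real.log (Real.Gamma (((Dn k p:ℕ):ℝ)/2 + 1)) ≤
        Real.log (Real.sqrt π) + Real.log (((Dn k p:ℕ):ℝ)+1) +
          Real.log (((mm k p).factorial : ℕ) : ℝ) := by
      have h1 : Real.log (Real.Gamma (((Dn k p:ℕ):ℝ)/2 + 1)) ≤
          Real.log (Real.sqrt π * ((mm k p + 1).factorial : ℝ)) :=
        Real.log_le_log hΓ hub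
      have h2 : Real.sqrt π * ((mm k p + 1).factorial : ℝ) =
          Real.sqrt π * ((((mm k p):ℕ):ℝ) + 1) * ((mm k p).factorial : ℝ) := by
        rw [hfacsucc]; ring
      have h3 : Real.log (Real.sqrt π * ((((mm k p):ℕ):ℝ) + 1) * ((mm k p).factorial : ℝ)) =
          Real.log (Real.sqrt π) + Real.log ((((mm k p):ℕ):ℝ) + 1) +
            Real.log (((mm k p).factorial : ℕ) : ℝ) := by
        rw [Real.log_mul (by positivity) (ne_of_gt hfac), Real.log_mul (by positivity)
          (by positivity)]
      have h4 : Real.log ((((mm k p):ℕ):ℝ) + 1) ≤ Real.log (((Dn k p:ℕ):ℝ)+1) := by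
        apply Real.log_le_log (by positivity)
        have : mm k p + 1 ≤ Dn k p + 1 := by
          have := (mm_facts k p hk).2.2.1; omega
        exact_mod_cast this
      rw [h2, h3] at h1
      linarith
    calc (Real.log (Real.Gamma (((Dn k p:ℕ):ℝ)/2 + 1)) - Real.log (Pp k p)) / ((Dn k p:ℕ):ℝ)
        ≤ (Real.log (((mm k p).factorial : ℕ) : ℝ) - Real.log (Pp k p) +
            (Real.log (Real.sqrt π) + Real.log (((Dn k p:ℕ):ℝ)+1))) / ((Dn k p:ℕ):ℝ) := by
          apply (div_le_div_iff_of_pos_right hD).mpr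
          linarith
      _ = (Real.log (((mm k p).factorial : ℕ) : ℝ) - Real.log (Pp k p)) / ((Dn k p:ℕ):ℝ) +
          (Real.log (Real.sqrt π) * (1/((Dn k p:ℕ):ℝ)) +
            Real.log (((Dn k p:ℕ):ℝ)+1) / ((Dn k p:ℕ):ℝ)) := by ring

lemma part_iii (k : ℕ) (hk : 1 ≤ k) (R : ℝ) (hR : 0 < R) :
    Tendsto (gvRadiusStiefel k R) atTop
      (𝓝 (Real.sqrt ((k : ℝ) * (2 : ℝ) ^ (-R / (k : ℝ))))) := by
  rw [← Filter.tendsto_add_atTop_iff_nat (k+1)]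
  have hkR : (0:ℝ) < k := by exact_mod_cast hk
  have hND : Tendsto (fun p : ℕ => ((p:ℝ)+k+1)/((Dn k p:ℕ):ℝ)) atTop
      (𝓝 ((2*(k:ℝ))⁻¹)) := by
    have h := (tendsto_D_div_N k hk).inv₀ (by positivity)
    apply h.congr fun p => ?_
    rw [inv_div]
  have hT1 : Tendsto (fun p : ℕ => (-((p:ℝ)+k+1)*R*Real.log 2)/((Dn k p:ℕ):ℝ)) atTop
      (𝓝 ((-R*Real.log 2) * (2*(k:ℝ))⁻¹)) := by
    have h := hND.const_mul (-R*Real.log 2)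
    apply h.congr fun p => ?_
    ring
  have hT2 : Tendsto (fun p : ℕ => ((k:ℝ)*Real.log 2 + (k:ℝ)/2*Real.log π)/((Dn k p:ℕ):ℝ))
      atTop (𝓝 0) := by
    have h := (tendsto_one_div_Dn k hk).const_mul ((k:ℝ)*Real.log 2 + (k:ℝ)/2*Real.log π)
    rw [mul_zero] at h
    apply h.congr fun p => ?_
    ring
  have hE := (hT1.add hT2).add (tendsto_F3 k hk)
  rw [add_zero] at hE
  have hexp := (Real.continuous_exp.tendsto _).comp hE
  have htarget : Real.exp ((-R*Real.log 2) * (2*(k:ℝ))⁻¹ + Real.log k / 2) =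
      Real.sqrt ((k : ℝ) * (2 : ℝ) ^ (-R / (k : ℝ))) := by
    have hx : (0:ℝ) < (k:ℝ) * (2:ℝ)^(-R/(k:ℝ)) := by positivity
    have h1 : Real.sqrt ((k:ℝ) * (2:ℝ)^(-R/(k:ℝ))) =
        Real.exp (Real.log ((k:ℝ) * (2:ℝ)^(-R/(k:ℝ))) / 2) := by
      rw [← Real.exp_log (Real.sqrt_pos.mpr hx), Real.log_sqrt hx.le]
    rw [h1, Real.log_mul (ne_of_gt hkR) (by positivity),
      Real.log_rpow (by norm_num : (0:ℝ) < 2)]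
    congr 1
    field_simp
    ring
  rw [← htarget]
  apply hexp.congr fun p => ?_
  -- pointwise: exp (E p) = gvRadiusStiefel k R (p+(k+1))
  have hkn : k ≤ p+(k+1) := by omega
  have hDeq : k*(2*(p+(k+1)) - k) = Dn k p := by unfold Dn; congr 1; omega
  have hprod : (∏ t ∈ Finset.range k, (((p+(k+1)) - k + t).factorial : ℝ)) = Pp k p := by
    rw [Pp]
    refine Finset.prod_congr rfl fun t _ => ?_
    have : (p+(k+1)) - k + t = p+1+t := by omega
    rw [this]
  have hΓ : 0 < Real.Gamma (((Dn k p:ℕ):ℝ)/2 + 1) := Real.Gamma_pos_of_pos (by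
    have := Dn_pos k p hk; positivity)
  have hPp := Pp_pos k p
  have hπ := Real.pi_pos
  have hD := Dn_pos k p hk
  rw [Function.comp_apply]
  conv_rhs => rw [gvRadiusStiefel, mul_div_assoc, ratio_eq k (p+(k+1)) hk hkn, hDeq, hprod]
  have hb : (0:ℝ) < (2:ℝ)^(-((p+(k+1):ℕ):ℝ)*R) *
      (2^k * π ^ ((k:ℝ)/2) * Real.Gamma (((Dn k p:ℕ):ℝ)/2 + 1) / Pp k p) := by
    have h2 : (0:ℝ) < (2:ℝ)^(-((p+(k+1):ℕ):ℝ)*R) := Real.rpow_pos_of_pos (by norm_num) _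
    have h3 : (0:ℝ) < π ^ ((k:ℝ)/2) := Real.rpow_pos_of_pos hπ _
    positivity
  rw [Real.rpow_def_of_pos hb]
  congr 1
  rw [Real.log_mul (by positivity) (by positivity),
    Real.log_rpow (by norm_num : (0:ℝ) < 2),
    Real.log_div (by positivity) (ne_of_gt hPp),
    Real.log_mul (by positivity) (ne_of_gt hΓ),
    Real.log_mul (by positivity) (by positivity),
    Real.log_pow, Real.log_rpow hπ]
  push_cast
  ring

theorem gv_radius_stiefel_bound_and_limit (k : ℕ) (hk : 1 ≤ k) (R : ℝ) (hR : 0 < R) :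
    (∀ n : ℕ, k ≤ n →
      ((1 : ℝ) / 2) ^ ((n : ℝ) * R / ((k * (2 * n - k) : ℕ) : ℝ)) ≤
        gvRadiusStiefel k R n) ∧
    (∀ m n : ℕ, k ≤ m → m ≤ n →
      ((1 : ℝ) / 2) ^ ((m : ℝ) * R / ((k * (2 * m - k) : ℕ) : ℝ)) ≤
        ((1 : ℝ) / 2) ^ ((n : ℝ) * R / ((k * (2 * n - k) : ℕ) : ℝ))) ∧
    Tendsto (gvRadiusStiefel k R) atTop
      (nhds (Real.sqrt ((k : ℝ) * (2 : ℝ) ^ (-R / (k : ℝ))))) := by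
  exact ⟨fun n hn => part_i k hk R hR n hn,
    fun m n hm hmn => part_ii k hk R hR m n hm hmn,
    part_iii k hk R hR⟩
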